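/- Let u : Fin n → ℝ and v : Fin m → ℝ be strictly increasing and define δ(i,j) as above for 1 ≤ i ≤ n−1, 1 ≤ j ≤ m−1. Then on each anti-diagonal {(i,j) : i + j = s} there is at most one pair with δ(i,j) ≠ 0; consequently the total number of pairs (i,j) with δ(i,j) ≠ 0 is at most n + m − 3. -/

import Mathlib

theorem delta_support_card_bound (n m : ℕ) (hn : 2 ≤ n) (hm : 2 ≤ m)
    (u v : ℕ → ℝ) (hu : StrictMono u) (hv : StrictMono v)
    (δ : ℕ → ℕ → ℝ)
    (hδ : ∀ i j, δ i j =
      |u i - v (j+1)| + |u (i+1) - v j| - |u i - v j| - |u (i+1) - v (j+1)|) :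
    (∀ i j k l, 1 ≤ i → i ≤ n - 1 → 1 ≤ j → j ≤ m - 1 →
        1 ≤ k → k ≤ n - 1 → 1 ≤ l → l ≤ m - 1 →
        δ i j ≠ 0 → δ k l ≠ 0 → i + j = k + l → (i, j) = (k, l)) ∧
    (((Finset.Icc 1 (n-1)) ×ˢ (Finset.Icc 1 (m-1))).filter
        (fun p => δ p.1 p.2 ≠ 0)).card ≤ n + m - 3 := by
  have key : ∀ i j, δ i j ≠ 0 → u i < v (j+1) ∧ v j < u (i+1) := by
    intro i j h
    have h1 : u i < u (i+1) := hu (Nat.lt_succ_self i)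
    have h2 : v j < v (j+1) := hv (Nat.lt_succ_self j)
    constructor
    · by_contra hc
      push_neg at hc
      apply h
      rw [hδ, abs_of_nonneg (by linarith), abs_of_nonneg (by linarith),
        abs_of_nonneg (by linarith), abs_of_nonneg (by linarith)]
      ring
    · by_contra hc
      push_neg at hc
      apply h
      rw [hδ, abs_of_nonpos (by linarith), abs_of_nonpos (by linarith),
        abs_of_nonpos (by linarith), abs_of_nonpos (by linarith)]
      ring
  have uniq : ∀ i j k l, 1 ≤ i → i ≤ n - 1 → 1 ≤ j → j ≤ m - 1 →
      1 ≤ k → k ≤ n - 1 → 1 ≤ l → l ≤ m - 1 →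
      δ i j ≠ 0 → δ k l ≠ 0 → i + j = k + l → (i, j) = (k, l) := by
    intro i j k l _ _ _ _ _ _ _ _ hij hkl hs
    rcases lt_trichotomy i k with h | h | h
    · exfalso
      have ha := (key i j hij).2
      have hb := (key k l hkl).1
      have hc : u (i+1) ≤ u k := hu.le_iff_le.mpr (by omega)
      have hd : v (l+1) ≤ v j := hv.le_iff_le.mpr (by omega)
      linarith
    · have : j = l := by omega
      simp [h, this]
    · exfalso
      have ha := (key k l hkl).2
      have hb := (key i j hij).1
      have hc : u (k+1) ≤ u i := hu.le_iff_le.mpr (by omega)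
      have hd : v (j+1) ≤ v l := hv.le_iff_le.mpr (by omega)
      linarith
  refine ⟨uniq, ?_⟩
  have hcard := Finset.card_le_card_of_injOn (f := fun p : ℕ × ℕ => p.1 + p.2)
    (t := Finset.Icc 2 (n+m-2))
    (s := ((Finset.Icc 1 (n-1)) ×ˢ (Finset.Icc 1 (m-1))).filter
        (fun p => δ p.1 p.2 ≠ 0))
    (by
      intro p hp
      simp only [Finset.mem_coe, Finset.mem_filter, Finset.mem_product, Finset.mem_Icc] at hp ⊢
      omega)
    (by
      intro p hp q hq hpq
      rw [Finset.mem_coe, Finset.mem_filter, Finset.mem_product, Finset.mem_Icc,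
        Finset.mem_Icc] at hp hq
      have := uniq p.1 p.2 q.1 q.2 hp.1.1.1 hp.1.1.2 hp.1.2.1 hp.1.2.2
        hq.1.1.1 hq.1.1.2 hq.1.2.1 hq.1.2.2 hp.2 hq.2 hpq
      exact Prod.ext (congrArg Prod.fst this) (congrArg Prod.snd this))
  calc _ ≤ (Finset.Icc 2 (n+m-2)).card := hcard
    _ = n + m - 3 := by rw [Nat.card_Icc]; omega
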